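/- Let G be a simple graph on a finite type V, let s : V, and define d₀ : V → ℕ∞ by d₀ s = 0 and d₀ v = ⊤ for v ≠ s. Define the synchronous Bellman–Ford update F : (V → ℕ∞) → (V → ℕ∞) by F d v = min (d v) ((⨅ u ∈ G.neighborSet v, d u) + 1). Then for every k : ℕ and every v : V with G.edist s v ≤ k, one has F^[k] d₀ v = G.edist s v. -/

import Mathlib

theorem bellman_ford_converged_of_edist_le {V : Type*} [Fintype V] [DecidableEq V]
    (G : SimpleGraph V) (s : V)
    (d₀ : V → ℕ∞) (hd₀s : d₀ s = 0) (hd₀ : ∀ v, v ≠ s → d₀ v = ⊤)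
    (F : (V → ℕ∞) → (V → ℕ∞))
    (hF : ∀ d v, F d v = min (d v) ((⨅ u ∈ G.neighborSet v, d u) + 1)) :
    ∀ (k : ℕ) (v : V), G.edist s v ≤ k → F^[k] d₀ v = G.edist s v := by
  have lower : ∀ (k : ℕ) (v : V), G.edist s v ≤ F^[k] d₀ v := by
    intro k
    induction k with
    | zero =>
      intro v
      simp only [Function.iterate_zero, id]
      by_cases h : v = s
      · subst h; simp [hd₀s, SimpleGraph.edist_self]
      · rw [hd₀ v h]; exact le_top
    | succ k ih =>
      intro v
      rw [Function.iterate_succ_apply', hF]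
      refine le_min (ih v) ?_
      rw [← tsub_le_iff_right]
      refine le_iInf₂ fun u hu => ?_
      rw [tsub_le_iff_right]
      have hadj : G.Adj u v := (G.mem_neighborSet v u).mp hu |>.symm
      calc G.edist s v ≤ G.edist s u + G.edist u v := G.edist_triangle
        _ = G.edist s u + 1 := by rw [SimpleGraph.edist_eq_one_iff_adj.mpr hadj]
        _ ≤ F^[k] d₀ u + 1 := add_le_add_left (ih u) 1
  have upper : ∀ (k : ℕ) (v : V), G.edist s v ≤ k → F^[k] d₀ v ≤ G.edist s v := by
    intro k
    induction k with
    | zero =>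
      intro v h
      have h0 : G.edist s v = 0 := le_antisymm (by simpa using h) zero_le
      have hv : s = v := SimpleGraph.edist_eq_zero_iff.mp h0
      subst hv
      simp [hd₀s, h0]
    | succ k ih =>
      intro v h
      by_cases hk : G.edist s v ≤ k
      · have h1 := ih v hk
        rw [Function.iterate_succ_apply', hF]
        exact le_trans (min_le_left _ _) h1
      · have hlt : (k : ℕ∞) < G.edist s v := lt_of_not_ge hk
        have hge : ((k : ℕ) + 1 : ℕ∞) ≤ G.edist s v := Order.add_one_le_of_lt hlt
        have heq : G.edist s v = ((k + 1 : ℕ) : ℕ∞) := by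
          refine le_antisymm h ?_
          push_cast
          exact hge
        obtain ⟨p, hp⟩ := SimpleGraph.exists_walk_of_edist_eq_coe heq
        have hpr : p.reverse.length = k + 1 := by rw [SimpleGraph.Walk.length_reverse, hp]
        cases hq : p.reverse with
        | nil => rw [hq] at hpr; simp at hpr
        | cons hadj q =>
          rename_i u
          have hqlen : q.length = k := by
            rw [hq] at hpr
            simpa using hpr
          have hus : G.edist s u ≤ k := by
            have := SimpleGraph.edist_le q.reverse
            rwa [SimpleGraph.Walk.length_reverse, hqlen] at this
          have hu : u ∈ G.neighborSet v := hadj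
          rw [Function.iterate_succ_apply', hF]
          refine le_trans (min_le_right _ _) ?_
          calc (⨅ w ∈ G.neighborSet v, F^[k] d₀ w) + 1
              ≤ F^[k] d₀ u + 1 := add_le_add_left (iInf₂_le u hu) 1
            _ ≤ G.edist s u + 1 := add_le_add_left (ih u hus) 1
            _ ≤ (k : ℕ∞) + 1 := add_le_add_left hus 1
            _ = G.edist s v := by rw [heq]; push_cast; rfl
  intro k v h
  exact le_antisymm (upper k v h) (lower k v)
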